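/- Define $S(n,d) = \sum_{i=0}^{n-1} \frac{1}{1 - \binom{i}{d}/\binom{n}{d}}$ and $H_n = \sum_{k=1}^{n} \frac{1}{k}$ as real numbers. For all natural numbers $n, d$ with $1 \leq d \leq n$, $$S(n,d) \;\geq\; \left(1 - \frac{d-1}{n}\right)\,\frac{n\, H_n}{d}.$$ -/

import Mathlib

noncomputable def S (n d : ℕ) : ℝ :=
  ∑ i ∈ Finset.range n, 1 / (1 - (i.choose d : ℝ) / (n.choose d : ℝ))

noncomputable def H (n : ℕ) : ℝ := ∑ k ∈ Finset.Icc 1 n, 1 / (k : ℝ)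

lemma choose_gap (i e : ℕ) : ∀ m : ℕ,
    (i + m).choose (e + 1) ≤ i.choose (e + 1) + m * (i + m).choose e := by
  intro m
  induction m with
  | zero => simp
  | succ m ih =>
    have pas : (i + (m + 1)).choose (e + 1)
        = (i + m).choose (e + 1) + (i + m).choose e := by
      have : i + (m + 1) = (i + m) + 1 := by ring
      rw [this, Nat.choose_succ_succ]
      ring
    have hmono : (i + m).choose e ≤ (i + (m + 1)).choose e :=
      Nat.choose_le_choose e (by omega)
    calc (i + (m + 1)).choose (e + 1)
        = (i + m).choose (e + 1) + (i + m).choose e := pas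
      _ ≤ (i.choose (e + 1) + m * (i + m).choose e) + (i + m).choose e :=
          Nat.add_le_add_right ih _
      _ = i.choose (e + 1) + (m + 1) * (i + m).choose e := by ring
      _ ≤ i.choose (e + 1) + (m + 1) * (i + (m + 1)).choose e := by
          exact Nat.add_le_add_left (Nat.mul_le_mul_left _ hmono) _

lemma key_nat (n d i : ℕ) (hd : 1 ≤ d) (hdn : d ≤ n) (hin : i ≤ n) :
    (n - d + 1) * (n.choose d - i.choose d) ≤ d * ((n - i) * n.choose d) := by
  obtain ⟨e, rfl⟩ : ∃ e, d = e + 1 := ⟨d - 1, by omega⟩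
  have hgap : n.choose (e + 1) ≤ i.choose (e + 1) + (n - i) * n.choose e := by
    have := choose_gap i e (n - i)
    rwa [Nat.add_sub_cancel' hin] at this
  have hrel : n.choose (e + 1) * (e + 1) = n.choose e * (n - e) :=
    Nat.choose_succ_right_eq n e
  have h1 : n.choose (e + 1) - i.choose (e + 1) ≤ (n - i) * n.choose e := by omega
  calc (n - (e + 1) + 1) * (n.choose (e + 1) - i.choose (e + 1))
      ≤ (n - e) * ((n - i) * n.choose e) := by
        have : n - (e + 1) + 1 = n - e := by omega
        rw [this]
        exact Nat.mul_le_mul_left _ h1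
    _ = (n - i) * (n.choose e * (n - e)) := by ring
    _ = (n - i) * (n.choose (e + 1) * (e + 1)) := by rw [hrel]
    _ = (e + 1) * ((n - i) * n.choose (e + 1)) := by ring

lemma choose_lt (n d i : ℕ) (hd : 1 ≤ d) (hdn : d ≤ n) (hin : i < n) :
    i.choose d < n.choose d := by
  rcases lt_or_ge i d with h | h
  · rw [Nat.choose_eq_zero_of_lt h]
    exact Nat.choose_pos hdn
  · obtain ⟨e, rfl⟩ : ∃ e, d = e + 1 := ⟨d - 1, by omega⟩
    have h1 : (i + 1).choose (e + 1) = i.choose e + i.choose (e + 1) :=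
      Nat.choose_succ_succ i e
    have h2 : (i + 1).choose (e + 1) ≤ n.choose (e + 1) :=
      Nat.choose_le_choose _ (by omega)
    have h3 : 0 < i.choose e := Nat.choose_pos (by omega)
    omega

theorem S_lower_bound (n d : ℕ) (hd : 1 ≤ d) (hdn : d ≤ n) :
    S n d ≥ (1 - ((d : ℝ) - 1) / n) * ((n : ℝ) * H n / d) := by
  have hn : 1 ≤ n := le_trans hd hdn
  have hn0 : (n : ℝ) ≠ 0 := by positivity
  have hd0 : (d : ℝ) ≠ 0 := by positivity
  -- RHS rewrite
  have hRHS : (1 - ((d : ℝ) - 1) / n) * ((n : ℝ) * H n / d)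
      = ((n : ℝ) - d + 1) / d * H n := by
    field_simp
    ring
  rw [hRHS]
  -- harmonic reindex
  have hH' : ∀ m : ℕ, H m = ∑ j ∈ Finset.range m, 1 / ((j : ℝ) + 1) := by
    intro m
    induction m with
    | zero => simp [H]
    | succ m ih =>
      rw [H, Finset.sum_Icc_succ_top (by omega : 1 ≤ m + 1), ← H, ih,
        Finset.sum_range_succ]
      push_cast
      ring
  have hH : H n = ∑ i ∈ Finset.range n, 1 / ((n : ℝ) - i) := by
    rw [hH' n, ← Finset.sum_range_reflect (fun i => 1 / ((n : ℝ) - i)) n]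
    apply Finset.sum_congr rfl
    intro i hi
    simp only [Finset.mem_range] at hi
    have : ((n - 1 - i : ℕ) : ℝ) = (n : ℝ) - 1 - i := by
      rw [Nat.cast_sub (by omega : i ≤ n - 1), Nat.cast_sub (by omega : 1 ≤ n)]
      push_cast; ring
    simp only [this]
    ring_nf
  rw [hH, Finset.mul_sum]
  apply Finset.sum_le_sum
  intro i hi
  simp only [Finset.mem_range] at hi
  have hcpos : (0 : ℝ) < n.choose d := by
    exact_mod_cast Nat.choose_pos hdn
  have hclt : (i.choose d : ℝ) < n.choose d := by
    exact_mod_cast choose_lt n d i hd hdn hi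
  have hpos : (0 : ℝ) < 1 - (i.choose d : ℝ) / (n.choose d : ℝ) := by
    rw [sub_pos, div_lt_one hcpos]
    exact hclt
  have hni : (0 : ℝ) < (n : ℝ) - i := by
    have : (i : ℝ) < n := by exact_mod_cast hi
    linarith
  have hdni : (0 : ℝ) < (d : ℝ) * ((n : ℝ) - i) := by positivity
  rw [div_mul_div_comm, mul_one]
  rw [div_le_div_iff₀ hdni hpos]
  -- goal: ((n:ℝ)-d+1)*(1 - Ci/Cn) ≤ 1 * (d*((n:ℝ)-i))... check orientation
  have hkey : ((n : ℝ) - d + 1) * ((n.choose d : ℝ) - i.choose d)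
      ≤ (d : ℝ) * (((n : ℝ) - i) * n.choose d) := by
    have := key_nat n d i hd hdn (le_of_lt hi)
    have hc : ((n - d + 1 : ℕ) : ℝ) * (((n.choose d - i.choose d : ℕ)) : ℝ)
        ≤ ((d : ℕ) : ℝ) * ((((n - i : ℕ)) : ℝ) * ((n.choose d : ℕ) : ℝ)) := by
      exact_mod_cast this
    rwa [Nat.cast_add, Nat.cast_one, Nat.cast_sub hdn, Nat.cast_sub (le_of_lt hi),
      Nat.cast_sub (Nat.choose_le_choose d (le_of_lt hi))] at hc
  have hexp : ((n : ℝ) - d + 1) * (1 - (i.choose d : ℝ) / n.choose d)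
      = ((n : ℝ) - d + 1) * (((n.choose d : ℝ) - i.choose d) / n.choose d) := by
    rw [sub_div, div_self (ne_of_gt hcpos)]
  calc ((n : ℝ) - d + 1) * (1 - (i.choose d : ℝ) / n.choose d)
      = ((n : ℝ) - d + 1) * (((n.choose d : ℝ) - i.choose d)) / n.choose d := by
        rw [hexp]; ring
    _ ≤ (d : ℝ) * (((n : ℝ) - i) * n.choose d) / n.choose d := by
        gcongr
    _ = 1 * ((d : ℝ) * ((n : ℝ) - i)) := by
        field_simp
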